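/- For the tensor product ensemble E = ⊗_{l=1}^L E^l of quantum state ensembles E^l = {(η_i^l, ρ_i^l)}, the maximum confidence to identify the sequence state ρ_x⃗ = ⊗_l ρ_{x_l}^l with prior η_x⃗ = Π_l η_{x_l}^l factorizes: C_x⃗(E) = Π_{l=1}^L C_{x_l}(E^l). -/

import Mathlib

open Matrix BigOperators
open scoped ComplexOrder

/-- L-fold tensor (Kronecker) product of square complex matrices, realized on the
index type ∀ l, Fin (d l). -/
def tens {L : ℕ} {d : Fin L → ℕ}
    (X : ∀ l, Matrix (Fin (d l)) (Fin (d l)) ℂ) :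
    Matrix (∀ l, Fin (d l)) (∀ l, Fin (d l)) ℂ :=
  Matrix.of fun a b => ∏ l, X l (a l) (b l)

section helpers
variable {L : ℕ} {d : Fin L → ℕ}

lemma psd_zero {m : Type*} [Fintype m] : (0 : Matrix m m ℂ).PosSemidef :=
  ⟨isHermitian_zero, fun x => by simp⟩

lemma psd_add {m : Type*} [Fintype m] {A B : Matrix m m ℂ}
    (hA : A.PosSemidef) (hB : B.PosSemidef) : (A + B).PosSemidef :=
  PosSemidef.of_dotProduct_mulVec_nonneg (hA.1.add hB.1) fun x => by
    simpa [add_mulVec, dotProduct_add] using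
      add_nonneg (hA.dotProduct_mulVec_nonneg x) (hB.dotProduct_mulVec_nonneg x)

lemma herm_real_smul {m : Type*} [Fintype m] {A : Matrix m m ℂ}
    (hA : A.IsHermitian) (c : ℝ) : ((c : ℂ) • A).IsHermitian := by
  unfold Matrix.IsHermitian
  rw [conjTranspose_smul, hA.eq]
  congr 1
  simp [Complex.star_def, Complex.conj_ofReal]

lemma psd_smul {m : Type*} [Fintype m] {A : Matrix m m ℂ}
    (hA : A.PosSemidef) {c : ℝ} (hc : 0 ≤ c) : ((c : ℂ) • A).PosSemidef := by
  refine PosSemidef.of_dotProduct_mulVec_nonneg (herm_real_smul hA.1 c) fun x => ?_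
  rw [smul_mulVec, dotProduct_smul, smul_eq_mul]
  exact mul_nonneg (by exact_mod_cast hc) (hA.dotProduct_mulVec_nonneg x)

lemma psd_sum {m ι : Type*} [Fintype m] {s : Finset ι} {f : ι → Matrix m m ℂ}
    (h : ∀ i ∈ s, (f i).PosSemidef) : (∑ i ∈ s, f i).PosSemidef :=
  Finset.sum_induction f _ (fun _ _ => psd_add) psd_zero h

lemma psd_trace_nonneg {m : Type*} [Fintype m] [DecidableEq m] {M : Matrix m m ℂ}
    (h : M.PosSemidef) : 0 ≤ M.trace := by
  apply Finset.sum_nonneg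
  intro i _
  have := h.dotProduct_mulVec_nonneg (Pi.single i 1)
  rw [show star (Pi.single i 1) ⬝ᵥ M *ᵥ Pi.single i (1:ℂ) = M i i from ?_] at this
  · exact this
  · rw [mulVec_single]
    simp [dotProduct, Pi.single_apply, apply_ite]

lemma tens_smul (c : Fin L → ℝ) (X : ∀ l, Matrix (Fin (d l)) (Fin (d l)) ℂ) :
    tens (fun l => (c l : ℂ) • X l) = ((∏ l, c l : ℝ) : ℂ) • tens X := by
  ext a b
  simp [tens, Finset.prod_mul_distrib]

lemma tens_conjTranspose (X : ∀ l, Matrix (Fin (d l)) (Fin (d l)) ℂ) :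
    (tens X)ᴴ = tens fun l => (X l)ᴴ := by
  ext a b
  simp [tens, conjTranspose_apply, star_prod]

lemma tens_mul (X Y : ∀ l, Matrix (Fin (d l)) (Fin (d l)) ℂ) :
    tens X * tens Y = tens fun l => X l * Y l := by
  ext a b
  simp only [tens, mul_apply, of_apply]
  rw [Fintype.prod_sum (fun l j => X l (a l) j * Y l j (b l))]
  exact Finset.sum_congr rfl fun x _ => (Finset.prod_mul_distrib).symm

lemma tens_psd {X : ∀ l, Matrix (Fin (d l)) (Fin (d l)) ℂ}
    (h : ∀ l, (X l).PosSemidef) : (tens X).PosSemidef := by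
  choose B hB using fun l => (by open scoped MatrixOrder Matrix.Norms.L2Operator in exact CStarAlgebra.nonneg_iff_eq_star_mul_self.mp (nonneg_iff_posSemidef.mpr (h l)) : ∃ B : Matrix (Fin (d l)) (Fin (d l)) ℂ, X l = Bᴴ * B)
  have hX : X = fun l => (B l)ᴴ * B l := funext hB
  rw [hX, ← tens_mul, ← tens_conjTranspose]
  exact posSemidef_conjTranspose_mul_self _

def tvec {L : ℕ} {d : Fin L → ℕ} (w : ∀ l, Fin (d l) → ℂ) : (∀ l, Fin (d l)) → ℂ :=
  fun a => ∏ l, w l (a l)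

lemma tens_mulVec (X : ∀ l, Matrix (Fin (d l)) (Fin (d l)) ℂ) (w : ∀ l, Fin (d l) → ℂ) :
    tens X *ᵥ tvec w = tvec fun l => X l *ᵥ w l := by
  funext a
  simp only [mulVec, dotProduct, tens, of_apply, tvec]
  rw [Fintype.prod_sum (fun l j => X l (a l) j * w l j)]
  exact Finset.sum_congr rfl fun x _ => (Finset.prod_mul_distrib).symm

lemma star_tvec (w : ∀ l, Fin (d l) → ℂ) : star (tvec w) = tvec fun l => star (w l) := by
  funext a
  simp [tvec, star_prod]

lemma tvec_dot (u v : ∀ l, Fin (d l) → ℂ) : tvec u ⬝ᵥ tvec v = ∏ l, u l ⬝ᵥ v l := by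
  simp only [dotProduct, tvec]
  rw [Fintype.prod_sum (fun l j => u l j * v l j)]
  exact Finset.sum_congr rfl fun x _ => (Finset.prod_mul_distrib).symm

lemma tens_quad (X : ∀ l, Matrix (Fin (d l)) (Fin (d l)) ℂ) (w : ∀ l, Fin (d l) → ℂ) :
    star (tvec w) ⬝ᵥ (tens X *ᵥ tvec w) = ∏ l, star (w l) ⬝ᵥ (X l *ᵥ w l) := by
  rw [tens_mulVec, star_tvec, tvec_dot]

lemma tens_sub_update [NeZero L] (F G : ∀ l, Matrix (Fin (d l)) (Fin (d l)) ℂ) (k : Fin L)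
    (hFG : ∀ l, l ≠ k → F l = G l) :
    tens F - tens G = tens (Function.update F k (F k - G k)) := by
  ext a b
  simp only [Matrix.sub_apply, tens, of_apply]
  rw [← Finset.mul_prod_erase Finset.univ (fun l => F l (a l) (b l)) (Finset.mem_univ k),
      ← Finset.mul_prod_erase Finset.univ (fun l => G l (a l) (b l)) (Finset.mem_univ k),
      ← Finset.mul_prod_erase Finset.univ
        (fun l => Function.update F k (F k - G k) l (a l) (b l)) (Finset.mem_univ k)]
  have h1 : ∀ l ∈ Finset.univ.erase k, G l (a l) (b l) = F l (a l) (b l) := fun l hl => by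
    rw [hFG l (Finset.ne_of_mem_erase hl)]
  have h2 : ∀ l ∈ Finset.univ.erase k,
      Function.update F k (F k - G k) l (a l) (b l) = F l (a l) (b l) := fun l hl => by
    rw [Function.update_of_ne (Finset.ne_of_mem_erase hl)]
  rw [Finset.prod_congr rfl h1, Finset.prod_congr rfl h2, Function.update_self, Matrix.sub_apply]
  ring

end helpers

/-- the maximum confidence of identifying the sequence state
ρ_x⃗ = ⊗_l ρ_{x_l} from E = ⊗_l E^l factorizes: C_x⃗(E) = ∏_l C_{x_l}(E^l),
where C is characterized as min{q : q ρ₀ − η ρ ⪰ 0}. -/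
theorem stmt_12 {L : ℕ} (hL : 0 < L) {d n : Fin L → ℕ}
    (hd : ∀ l, 0 < d l) (hn : ∀ l, 0 < n l)
    (η : ∀ l, Fin (n l) → ℝ)
    (ρ : ∀ l, Fin (n l) → Matrix (Fin (d l)) (Fin (d l)) ℂ)
    (hη : ∀ l i, 0 < η l i) (hηsum : ∀ l, ∑ i, η l i = 1)
    (hρ : ∀ l i, (ρ l i).PosSemidef) (hρtr : ∀ l i, (ρ l i).trace = 1)
    (ρ₀ : ∀ l, Matrix (Fin (d l)) (Fin (d l)) ℂ)
    (hρ₀ : ∀ l, ρ₀ l = ∑ i, (η l i : ℂ) • ρ l i)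
    (C : ∀ l, Fin (n l) → ℝ)
    (hC : ∀ l i, IsLeast { q : ℝ | ((q : ℂ) • ρ₀ l - (η l i : ℂ) • ρ l i).PosSemidef } (C l i)) (x : ∀ l, Fin (n l)) :
    IsLeast { q : ℝ | ((q : ℂ) • tens ρ₀ -
        ((∏ l, η l (x l) : ℝ) : ℂ) • tens (fun l => ρ l (x l))).PosSemidef }
      (∏ l, C l (x l)) := by
  have : NeZero L := ⟨hL.ne'⟩
  have : Nonempty (Fin L) := ⟨⟨0, hL⟩⟩
  -- basic facts
  have hρ₀psd : ∀ l, (ρ₀ l).PosSemidef := fun l => by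
    rw [hρ₀ l]
    exact psd_sum fun i _ => psd_smul (hρ l i) (hη l i).le
  have hρ₀tr : ∀ l, (ρ₀ l).trace = 1 := fun l => by
    rw [hρ₀ l, trace_sum]
    simp only [trace_smul, hρtr, smul_eq_mul, mul_one]
    rw [← Complex.ofReal_sum]
    exact_mod_cast hηsum l
  have hCge : ∀ l, η l (x l) ≤ C l (x l) := by
    intro l
    have h1 := (hC l (x l)).1
    have h2 := psd_trace_nonneg h1
    rw [trace_sub, trace_smul, trace_smul, hρ₀tr, hρtr, smul_eq_mul, smul_eq_mul,
      mul_one, mul_one, ← Complex.ofReal_sub] at h2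
    have := Complex.zero_le_real.mp h2
    linarith
  have hCpos : ∀ l, 0 < C l (x l) := fun l => lt_of_lt_of_le (hη l (x l)) (hCge l)
  -- membership via telescoping
  have key : ∀ s : Finset (Fin L),
      (tens (fun l => if l ∈ s then (C l (x l) : ℂ) • ρ₀ l else (η l (x l) : ℂ) • ρ l (x l))
        - tens (fun l => (η l (x l) : ℂ) • ρ l (x l))).PosSemidef := by
    intro s
    induction s using Finset.induction_on with
    | empty => simp only [Finset.notMem_empty, if_false, sub_self]; exact psd_zero
    | insert k s hk ih =>
      set F1 := fun l => if l ∈ insert k s then (C l (x l) : ℂ) • ρ₀ l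
        else (η l (x l) : ℂ) • ρ l (x l) with hF1
      set F0 := fun l => if l ∈ s then (C l (x l) : ℂ) • ρ₀ l
        else (η l (x l) : ℂ) • ρ l (x l) with hF0
      set G := fun l => (η l (x l) : ℂ) • ρ l (x l) with hG
      have hsplit : tens F1 - tens G = (tens F1 - tens F0) + (tens F0 - tens G) :=
        (sub_add_sub_cancel _ _ _).symm
      rw [hsplit]
      refine psd_add ?_ ih
      have hagree : ∀ l, l ≠ k → F1 l = F0 l := by
        intro l hl
        simp only [hF1, hF0, Finset.mem_insert, hl, false_or]
      rw [tens_sub_update F1 F0 k hagree]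
      apply tens_psd
      intro l
      by_cases hlk : l = k
      · subst hlk
        rw [Function.update_self]
        have : F1 l - F0 l = (C l (x l) : ℂ) • ρ₀ l - (η l (x l) : ℂ) • ρ l (x l) := by
          simp only [hF1, hF0, Finset.mem_insert, true_or, if_pos, if_neg hk]
        rw [this]
        exact (hC l (x l)).1
      · rw [Function.update_of_ne hlk]
        simp only [hF1]
        split
        · exact psd_smul (hρ₀psd l) (hCpos l).le
        · exact psd_smul (hρ l (x l)) (hη l (x l)).le
  constructor
  · have h := key Finset.univ
    simp only [Finset.mem_univ, if_true] at h
    rwa [tens_smul (fun l => C l (x l)) ρ₀,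
      tens_smul (fun l => η l (x l)) (fun l => ρ l (x l))] at h
  -- lower bound
  intro q hq
  by_contra hcon
  push_neg at hcon
  set m := Finset.univ.inf' Finset.univ_nonempty (fun l => C l (x l)) with hm
  have hmpos : 0 < m := by
    rw [hm, Finset.lt_inf'_iff]
    exact fun l _ => hCpos l
  have hmle : ∀ l, m ≤ C l (x l) := fun l =>
    Finset.inf'_le _ (Finset.mem_univ l)
  set P : ℝ → ℝ := fun ε => ∏ l, (C l (x l) - ε) with hP
  have hcont : Continuous P := by
    apply continuous_finset_prod
    exact fun l _ => continuous_const.sub continuous_id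
  have h0 : P 0 = ∏ l, C l (x l) := by simp [hP]
  have ev1 : ∀ᶠ ε in nhds (0 : ℝ), q < P ε :=
    (hcont.tendsto 0).eventually (eventually_gt_nhds (h0 ▸ hcon))
  have ev2 : ∀ᶠ ε in nhds (0 : ℝ), ε < m := eventually_lt_nhds hmpos
  obtain ⟨ε, ⟨hqP, hεm⟩, hεpos⟩ :
      ∃ ε : ℝ, (q < P ε ∧ ε < m) ∧ ε ∈ Set.Ioi (0 : ℝ) := by
    have h3 : ∀ᶠ ε in nhdsWithin (0:ℝ) (Set.Ioi 0), q < P ε ∧ ε < m :=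
      (ev1.and ev2).filter_mono nhdsWithin_le_nhds
    exact (h3.and eventually_mem_nhdsWithin).exists
  rw [Set.mem_Ioi] at hεpos
  -- choose test vectors
  have hw : ∀ l, ∃ (w : Fin (d l) → ℂ) (a b : ℝ), 0 ≤ a ∧ 0 ≤ b ∧
      star w ⬝ᵥ (ρ₀ l *ᵥ w) = (a : ℂ) ∧ star w ⬝ᵥ (ρ l (x l) *ᵥ w) = (b : ℂ) ∧
      (C l (x l) - ε) * a < η l (x l) * b ∧ η l (x l) * b ≤ C l (x l) * a := by
    intro l
    have hnot : ¬ (((C l (x l) - ε : ℝ) : ℂ) • ρ₀ l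
        - (η l (x l) : ℂ) • ρ l (x l)).PosSemidef := by
      intro hmem
      have := (hC l (x l)).2 hmem
      linarith
    have hherm : (((C l (x l) - ε : ℝ) : ℂ) • ρ₀ l
        - (η l (x l) : ℂ) • ρ l (x l)).IsHermitian :=
      (herm_real_smul (hρ₀psd l).1 _).sub (herm_real_smul (hρ l (x l)).1 _)
    rw [Matrix.posSemidef_iff_dotProduct_mulVec, not_and] at hnot
    have := hnot hherm
    push_neg at this
    obtain ⟨w, hw⟩ := this
    set A := star w ⬝ᵥ (ρ₀ l *ᵥ w) with hAdef
    set B := star w ⬝ᵥ (ρ l (x l) *ᵥ w) with hBdef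
    have hA : A = (A.re : ℂ) :=
      Complex.eq_re_of_ofReal_le (by exact_mod_cast (hρ₀psd l).dotProduct_mulVec_nonneg w)
    have hB : B = (B.re : ℂ) :=
      Complex.eq_re_of_ofReal_le (by exact_mod_cast (hρ l (x l)).dotProduct_mulVec_nonneg w)
    have hE : ∀ r : ℝ, star w ⬝ᵥ (((r : ℂ) • ρ₀ l - (η l (x l) : ℂ) • ρ l (x l)) *ᵥ w)
        = ((r * A.re - η l (x l) * B.re : ℝ) : ℂ) := by
      intro r
      rw [sub_mulVec, dotProduct_sub, smul_mulVec, smul_mulVec,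
        dotProduct_smul, dotProduct_smul, smul_eq_mul, smul_eq_mul, ← hAdef, ← hBdef,
        hA, hB]
      push_cast
      simp
    rw [hE (C l (x l) - ε), Complex.zero_le_real, not_le] at hw
    have hle : η l (x l) * B.re ≤ C l (x l) * A.re := by
      have h6 := (hC l (x l)).1.dotProduct_mulVec_nonneg w
      rw [hE (C l (x l)), Complex.zero_le_real] at h6
      linarith
    exact ⟨w, A.re, B.re, (Complex.le_def.mp ((hρ₀psd l).dotProduct_mulVec_nonneg w)).1,
      (Complex.le_def.mp ((hρ l (x l)).dotProduct_mulVec_nonneg w)).1, by rw [← hAdef]; exact hA,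
      by rw [← hBdef]; exact hB, by linarith, hle⟩
  choose w a b ha hb hQa hQb hltab hleab using hw
  have hapos : ∀ l, 0 < a l := by
    intro l
    by_contra hna
    push_neg at hna
    nlinarith [hltab l, hleab l, mul_nonneg hεpos.le (neg_nonneg.mpr hna)]
  have hquad := hq.dotProduct_mulVec_nonneg (tvec w)
  rw [sub_mulVec, dotProduct_sub, smul_mulVec, smul_mulVec,
    dotProduct_smul, dotProduct_smul, smul_eq_mul, smul_eq_mul, tens_quad, tens_quad] at hquad
  have h1 : ∏ l, star (w l) ⬝ᵥ (ρ₀ l *ᵥ w l) = ((∏ l, a l : ℝ) : ℂ) := by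
    rw [Finset.prod_congr rfl fun l _ => hQa l, Complex.ofReal_prod]
  have h2 : ∏ l, star (w l) ⬝ᵥ (ρ l (x l) *ᵥ w l) = ((∏ l, b l : ℝ) : ℂ) := by
    rw [Finset.prod_congr rfl fun l _ => hQb l, Complex.ofReal_prod]
  rw [h1, h2, ← Complex.ofReal_mul, ← Complex.ofReal_mul, ← Complex.ofReal_sub,
    Complex.zero_le_real] at hquad
  have hprodle : ∏ l, ((C l (x l) - ε) * a l) ≤ ∏ l, (η l (x l) * b l) :=
    Finset.prod_le_prod (fun l _ => mul_nonneg (by linarith [hmle l]) (ha l))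
      (fun l _ => (hltab l).le)
  rw [Finset.prod_mul_distrib, Finset.prod_mul_distrib] at hprodle
  have hPa : (0 : ℝ) < ∏ l, a l := Finset.prod_pos fun l _ => hapos l
  have hfin : (∏ l, (C l (x l) - ε)) * ∏ l, a l ≤ q * ∏ l, a l :=
    le_trans hprodle (by linarith)
  have hPq : P ε ≤ q := le_of_mul_le_mul_right hfin hPa
  linarith
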